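/- arXiv:0805.4089 — 3 statements merged into one kernel-verified Lean document; each statement's English description precedes it below -/
import Mathlib

section
/- Let A be a commutative ring, M an additive commutative group, S an additive submonoid of M and f ∈ S. Let T = {g ∈ M | ∃ s ∈ S, ∃ m ∈ ℤ, g = s + m • f}; then T is an additive submonoid of M containing S. The ring homomorphism A[S] → A[T] induced by the inclusion S ⊆ T (taking the monomial single g 1 to single g 1) exhibits A[T] as the localisation of A[S] away from the single element single f 1, i.e., IsLocalization.Away (single f 1) holds for A[T] as an A[S]-algebra. -/
/- Inverting a monoid element `f ∈ S` corresponds to localising the monoid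
algebra `A[S]` at the monomial `single f 1`. -/

section MonoidLocalisation

variable {M : Type*} [AddCommGroup M]

/-- The submonoid `T = {s + m • f | s ∈ S, m ∈ ℤ}` of `M` obtained from `S`
by inverting `f ∈ S`. -/
def invertedSubmonoid (S : AddSubmonoid M) (f : M) (hf : f ∈ S) : AddSubmonoid M where
  carrier := {g : M | ∃ s ∈ S, ∃ m : ℤ, g = s + m • f}
  zero_mem' := ⟨0, S.zero_mem, 0, by simp⟩
  add_mem' := by
    rintro a b ⟨s, hs, m, rfl⟩ ⟨t, ht, l, rfl⟩
    exact ⟨s + t, S.add_mem hs ht, m + l, by rw [add_zsmul]; abel⟩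

theorem monoidAlgebra_inverting_is_localisation
    (A : Type*) [CommRing A] (M : Type*) [AddCommGroup M]
    (S : AddSubmonoid M) (f : M) (hf : f ∈ S) :
    -- `T` is a submonoid with the prescribed carrier, containing `S`
    ((invertedSubmonoid S f hf : Set M) = {g : M | ∃ s ∈ S, ∃ m : ℤ, g = s + m • f}) ∧
    ∃ hST : S ≤ invertedSubmonoid S f hf,
      -- and `A[T]` is the localisation of `A[S]` away from `single f 1`,
      -- via the ring homomorphism induced by the inclusion `S ⊆ T`
      letI : Algebra (AddMonoidAlgebra A S) (AddMonoidAlgebra A (invertedSubmonoid S f hf)) :=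
        (AddMonoidAlgebra.mapDomainRingHom A (AddSubmonoid.inclusion hST)).toAlgebra
      IsLocalization.Away (AddMonoidAlgebra.single (⟨f, hf⟩ : S) (1 : A))
        (AddMonoidAlgebra A (invertedSubmonoid S f hf)) := by
  have hST : S ≤ invertedSubmonoid S f hf := fun s hs => ⟨s, hs, 0, by simp⟩
  refine ⟨rfl, hST, ?_⟩
  set T := invertedSubmonoid S f hf with hT
  letI alg : Algebra (AddMonoidAlgebra A S) (AddMonoidAlgebra A T) :=
    (AddMonoidAlgebra.mapDomainRingHom A (AddSubmonoid.inclusion hST)).toAlgebra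
  set φ := AddMonoidAlgebra.mapDomainRingHom A (AddSubmonoid.inclusion hST) with hφ
  have halg : (algebraMap (AddMonoidAlgebra A S) (AddMonoidAlgebra A T)) = φ :=
    rfl
  have hφsingle : ∀ (s : S) (a : A),
      φ (AddMonoidAlgebra.single s a)
        = AddMonoidAlgebra.single (⟨s.1, hST s.2⟩ : T) a := by
    intro s a
    show AddMonoidAlgebra.mapDomain (AddSubmonoid.inclusion hST) (AddMonoidAlgebra.single s a) = _
    rw [AddMonoidAlgebra.mapDomain_single]
    rfl
  have hφinj : Function.Injective φ := by
    intro x y h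
    have hincl : Function.Injective (AddSubmonoid.inclusion hST) := by
      intro a b hab
      have h2 := congrArg Subtype.val hab
      exact Subtype.ext h2
    exact AddMonoidAlgebra.mapDomain_injective (f := AddSubmonoid.inclusion hST) hincl h
  set tf : T := ⟨f, hST hf⟩ with htf
  -- the key surjectivity claim
  have key : ∀ z : AddMonoidAlgebra A T, ∃ (n : ℕ) (x : AddMonoidAlgebra A S),
      z * AddMonoidAlgebra.single (n • tf) 1 = φ x := by
    intro z
    induction z using AddMonoidAlgebra.induction_linear with
    | zero => exact ⟨0, 0, by simp⟩
    | add p q hp hq =>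
      obtain ⟨n1, x1, h1⟩ := hp
      obtain ⟨n2, x2, h2⟩ := hq
      refine ⟨n1 + n2, x1 * AddMonoidAlgebra.single (n2 • (⟨f, hf⟩ : S)) 1
        + x2 * AddMonoidAlgebra.single (n1 • (⟨f, hf⟩ : S)) 1, ?_⟩
      have e2 : φ (AddMonoidAlgebra.single (n2 • (⟨f, hf⟩ : S)) 1)
          = AddMonoidAlgebra.single (n2 • tf) 1 := by
        rw [hφsingle]; congr 1
      have e1 : φ (AddMonoidAlgebra.single (n1 • (⟨f, hf⟩ : S)) 1)
          = AddMonoidAlgebra.single (n1 • tf) 1 := by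
        rw [hφsingle]; congr 1
      rw [map_add, map_mul, map_mul, e1, e2, ← h1, ← h2]
      rw [add_mul]
      congr 1
      · rw [mul_assoc, AddMonoidAlgebra.single_mul_single, one_mul, ← add_nsmul]
      · rw [mul_assoc, AddMonoidAlgebra.single_mul_single, one_mul, ← add_nsmul,
          add_comm n2 n1]
    | single g a =>
      obtain ⟨s, hs, m, hg⟩ := g.2
      refine ⟨m.natAbs, ?_, ?_⟩
      · have h0 : 0 ≤ m + (m.natAbs : ℤ) := by omega
        exact AddMonoidAlgebra.single
          ⟨s + (m + m.natAbs).toNat • f,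
            S.add_mem hs (AddSubmonoid.nsmul_mem S hf _)⟩ a
      · rw [AddMonoidAlgebra.single_mul_single, mul_one, hφsingle]
        congr 1
        apply Subtype.ext
        show g.1 + (m.natAbs • tf).1 = s + (m + m.natAbs).toNat • f
        have hv : (m.natAbs • tf).1 = m.natAbs • f := rfl
        rw [hv, hg, add_assoc]
        congr 1
        rw [← natCast_zsmul f m.natAbs, ← natCast_zsmul f ((m + (m.natAbs:ℤ)).toNat),
          Int.toNat_of_nonneg (by omega), ← add_zsmul]
  refine ⟨⟨?_, ?_, ?_⟩⟩
  · -- map_units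
    rintro ⟨y, n, rfl⟩
    rw [halg, map_pow]
    apply IsUnit.pow
    rw [hφsingle]
    have hneg : -f ∈ T := ⟨0, S.zero_mem, -1, by simp⟩
    refine IsUnit.of_mul_eq_one (AddMonoidAlgebra.single (⟨-f, hneg⟩ : T) 1) ?_
    rw [AddMonoidAlgebra.single_mul_single, mul_one, AddMonoidAlgebra.one_def]
    congr 1
    exact Subtype.ext (by simp)
  · -- surj
    intro z
    obtain ⟨n, x, h⟩ := key z
    refine ⟨⟨x, ⟨(AddMonoidAlgebra.single (⟨f, hf⟩ : S) (1 : A)) ^ n, n, rfl⟩⟩, ?_⟩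
    show z * algebraMap _ _ _ = algebraMap _ _ x
    rw [halg, map_pow, hφsingle, AddMonoidAlgebra.single_pow, one_pow]
    exact h
  · -- exists_of_eq
    intro x y h
    refine ⟨1, ?_⟩
    simp only [OneMemClass.coe_one, one_mul]
    exact hφinj h

end MonoidLocalisation
end

section
/- Let d be a positive integer, N = ℤ^d, M = Hom_ℤ(N, ℤ). Let n_1, …, n_m ∈ N and k, ℓ ∈ ℤ^m, and suppose there exist f_k, f_ℓ ∈ M with f_k(n_i) = −k_i and f_ℓ(n_i) = −ℓ_i for all i. Then the pointwise sum set satisfies B(k) + B(ℓ) = B(k + ℓ), where B(k) = {g ∈ M | g(n_i) ≥ −k_i for all i} and similarly for B(ℓ) and B(k+ℓ). -/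
open Pointwise

/- Additivity of the monomial bases of the line bundles `O(k)`:
`B(k) + B(ℓ) = B(k + ℓ)`, underlying `O(k) ⊗ O(ℓ) ≅ O(k + ℓ)`. -/
theorem lineBundle_bases_add
    (d m : ℕ) (hd : 0 < d) (n : Fin m → (Fin d → ℤ)) (k l : Fin m → ℤ)
    (fk fl : Module.Dual ℤ (Fin d → ℤ))
    (hfk : ∀ i, fk (n i) = -(k i)) (hfl : ∀ i, fl (n i) = -(l i)) :
    ({g : Module.Dual ℤ (Fin d → ℤ) | ∀ i : Fin m, -(k i) ≤ g (n i)}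
        + {g : Module.Dual ℤ (Fin d → ℤ) | ∀ i : Fin m, -(l i) ≤ g (n i)})
      = {g : Module.Dual ℤ (Fin d → ℤ) | ∀ i : Fin m, -(k i + l i) ≤ g (n i)} := by
  ext g
  constructor
  · rintro ⟨a, ha, b, hb, rfl⟩ i
    have := add_le_add (ha i) (hb i)
    simp only [LinearMap.add_apply]
    linarith
  · intro hg
    refine ⟨fk, fun i => (hfk i).ge, g - fk, fun i => ?_, add_sub_cancel fk g⟩
    have := hg i
    simp only [LinearMap.sub_apply, hfk i]
    linarith
end

section
/- Let M' be an additive commutative monoid, A a commutative ring, and v : M' → ℕ an additive monoid homomorphism. Let M'₀ = {m ∈ M' | v(m) = 0}, an additive submonoid of M'. Then the A-linear map π : A[M'] → A[M'₀] determined on monomials by π(single m a) = single m a if v(m) = 0 and π(single m a) = 0 otherwise is a surjective A-algebra homomorphism, and its kernel is the ideal of A[M'] generated by the set of monomials {single m 1 | m ∈ M', v(m) > 0}. -/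
/- The projection of a monoid algebra onto the part of valuation zero:
a surjective algebra homomorphism with kernel generated by the monomials of
positive valuation. -/

section ValuationProjection

variable {M' : Type*} [AddCommMonoid M']

/-- The submonoid `M'₀ = {m ∈ M' | v(m) = 0}` of elements of valuation zero. -/
def valuationZeroSubmonoid (v : M' →+ ℕ) : AddSubmonoid M' where
  carrier := {m : M' | v m = 0}
  zero_mem' := by simp
  add_mem' := by
    intro a b ha hb
    simp only [Set.mem_setOf_eq, map_add] at *
    omega

theorem monoidAlgebra_valuation_projection
    (A : Type*) [CommRing A] (M' : Type*) [AddCommMonoid M'] (v : M' →+ ℕ) :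
    (∀ m : M', m ∈ valuationZeroSubmonoid v ↔ v m = 0) ∧
    ∃ π : AddMonoidAlgebra A M' →ₐ[A] AddMonoidAlgebra A (valuationZeroSubmonoid v),
      -- `π` is determined on monomials:
      (∀ (m : M') (hm : m ∈ valuationZeroSubmonoid v) (a : A),
        π (AddMonoidAlgebra.single m a)
          = AddMonoidAlgebra.single (⟨m, hm⟩ : valuationZeroSubmonoid v) a) ∧
      (∀ (m : M') (a : A), v m ≠ 0 → π (AddMonoidAlgebra.single m a) = 0) ∧
      -- `π` is surjective
      Function.Surjective π ∧
      -- and its kernel is generated by the monomials of positive valuation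
      RingHom.ker (π : AddMonoidAlgebra A M' →+* AddMonoidAlgebra A (valuationZeroSubmonoid v))
        = Ideal.span {x : AddMonoidAlgebra A M' |
            ∃ m : M', 0 < v m ∧ x = AddMonoidAlgebra.single m (1 : A)} := by
  refine ⟨fun m => Iff.rfl, ?_⟩
  set M₀ := valuationZeroSubmonoid v
  -- the multiplicative map on monomials
  have hmem : ∀ m : M', m ∈ M₀ ↔ v m = 0 := fun m => Iff.rfl
  let f : Multiplicative M' →* AddMonoidAlgebra A M₀ :=
    { toFun := fun m =>
        if h : v (Multiplicative.toAdd m) = 0 then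
          AddMonoidAlgebra.single (⟨Multiplicative.toAdd m, h⟩ : M₀) 1 else 0
      map_one' := by
        simp only [toAdd_one, map_zero, dif_pos]
        rfl
      map_mul' := by
        intro x y
        simp only [toAdd_mul]
        by_cases hx : v (Multiplicative.toAdd x) = 0
        · by_cases hy : v (Multiplicative.toAdd y) = 0
          · rw [dif_pos (by simp [map_add, hx, hy]), dif_pos hx, dif_pos hy,
              AddMonoidAlgebra.single_mul_single, one_mul]
            rfl
          · rw [dif_neg (by simp [map_add, hx, hy]), dif_neg hy, mul_zero]
        · rw [dif_neg (by simp [map_add, hx]), dif_neg hx, zero_mul] }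
  let π : AddMonoidAlgebra A M' →ₐ[A] AddMonoidAlgebra A M₀ :=
    AddMonoidAlgebra.lift A _ M' f
  have hsingle0 : ∀ (m : M') (hm : m ∈ M₀) (a : A),
      π (AddMonoidAlgebra.single m a)
        = AddMonoidAlgebra.single (⟨m, hm⟩ : M₀) a := by
    intro m hm a
    have : π (AddMonoidAlgebra.single m a) = a • f (Multiplicative.ofAdd m) :=
      AddMonoidAlgebra.lift_single f m a
    rw [this]
    simp only [f, MonoidHom.coe_mk, OneHom.coe_mk, toAdd_ofAdd,
      dif_pos (show v m = 0 from hm)]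
    rw [AddMonoidAlgebra.smul_single', mul_one]
  have hsinglepos : ∀ (m : M') (a : A), v m ≠ 0 → π (AddMonoidAlgebra.single m a) = 0 := by
    intro m a hm
    have : π (AddMonoidAlgebra.single m a) = a • f (Multiplicative.ofAdd m) :=
      AddMonoidAlgebra.lift_single f m a
    rw [this]
    simp only [f, MonoidHom.coe_mk, OneHom.coe_mk, toAdd_ofAdd, dif_neg hm, smul_zero]
  refine ⟨π, hsingle0, hsinglepos, ?_, ?_⟩
  · -- surjectivity
    intro y
    induction y using AddMonoidAlgebra.induction with
    | zero => exact ⟨0, map_zero π⟩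
    | single_add m a fy _ _ ih =>
      obtain ⟨x, hx⟩ := ih
      exact ⟨AddMonoidAlgebra.single (m : M') a + x, by
        rw [map_add, hx, hsingle0 (m : M') m.2 a]⟩
  · -- kernel
    apply le_antisymm
    · -- ker ≤ span
      intro x hx
      have hx' : π x = 0 := hx
      -- the embedding back
      let e : AddMonoidAlgebra A M₀ →ₐ[A] AddMonoidAlgebra A M' :=
        AddMonoidAlgebra.mapDomainAlgHom A A M₀.subtype
      have he : ∀ (s : M₀) (a : A),
          e (AddMonoidAlgebra.single s a) = AddMonoidAlgebra.single (s : M') a := by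
        intro s a
        simp [e, AddMonoidAlgebra.mapDomainAlgHom, Finsupp.mapDomain_single]
      -- split x into positive-valuation part and the rest
      classical
      let y : AddMonoidAlgebra A M' :=
        ∑ m ∈ x.coeff.support.filter (fun m => v m ≠ 0), AddMonoidAlgebra.single m (x.coeff m)
      have hy : y ∈ Ideal.span {z : AddMonoidAlgebra A M' |
          ∃ m : M', 0 < v m ∧ z = AddMonoidAlgebra.single m (1 : A)} := by
        apply Ideal.sum_mem
        intro m hm
        rw [Finset.mem_filter] at hm
        have : AddMonoidAlgebra.single m (x.coeff m)
            = AddMonoidAlgebra.single (0 : M') (x.coeff m) * AddMonoidAlgebra.single m (1 : A) := by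
          rw [AddMonoidAlgebra.single_mul_single, zero_add, mul_one]
        rw [this]
        exact Ideal.mul_mem_left _ _ (Ideal.subset_span ⟨m, Nat.pos_of_ne_zero hm.2, rfl⟩)
      set z : AddMonoidAlgebra A M' :=
        ∑ m ∈ x.coeff.support.filter (fun m => v m = 0), AddMonoidAlgebra.single m (x.coeff m) with hz
      have hxsum : z + y = x := by
        rw [hz, Finset.sum_filter_add_sum_filter_not]
        conv_rhs => rw [← AddMonoidAlgebra.sum_coeff_single x]
        rfl
      have hπy : π y = 0 := by
        rw [map_sum]
        apply Finset.sum_eq_zero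
        intro m hm
        exact hsinglepos m (x.coeff m) (Finset.mem_filter.mp hm).2
      have hπz : π z = 0 := by
        have : π z + π y = 0 := by rw [← map_add, hxsum]; exact hx'
        rwa [hπy, add_zero] at this
      have hez : e (π z) = z := by
        rw [hz, map_sum, map_sum]
        apply Finset.sum_congr rfl
        intro m hm
        have hm0 : v m = 0 := (Finset.mem_filter.mp hm).2
        rw [hsingle0 m hm0, he]
      have hz0 : z = 0 := by rw [← hez, hπz, map_zero]
      rw [← hxsum, hz0, zero_add]
      exact hy
    · -- span ≤ ker
      rw [Ideal.span_le]
      rintro x ⟨m, hm, rfl⟩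
      exact hsinglepos m 1 (by omega)

end ValuationProjection
end
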